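/- Let π be a group and suppose the family F₁ is strictly contained in the family D. Then the maximal elements of D∖F₁ with respect to inclusion are precisely the subgroups H_{γ,e} = (γ,e)·Δ(π)·(γ⁻¹,e) for γ ∈ π. -/
import Mathlib


/-- The diagonal homomorphism `π → π × π`. -/
def diagHom (π : Type*) [Group π] : π →* π × π :=
  MonoidHom.prod (MonoidHom.id π) (MonoidHom.id π)

/-- The subgroup `H_{γ,S} = (γ,e)·Δ(Z_π(S))·(γ⁻¹,e)` of `π × π`. -/
def Hsub {π : Type*} [Group π] (γ : π) (S : Set π) : Subgroup (π × π) :=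
  Subgroup.map (MulAut.conj ((γ, (1 : π)) : π × π)).toMonoidHom
    (Subgroup.map (diagHom π) (Subgroup.centralizer S))

/-- The family of subgroups of `G` generated by a set `H` of subgroups: all conjugates of
members of `H` together with all their subgroups. -/
def famGen {G : Type*} [Group G] (H : Set (Subgroup G)) : Set (Subgroup G) :=
  {K | ∃ M ∈ H, ∃ g : G, K ≤ Subgroup.map (MulAut.conj g).toMonoidHom M}

/-- The family `D = F⟨Δ(π)⟩` of subgroups of `π × π`. -/
def famD (π : Type*) [Group π] : Set (Subgroup (π × π)) :=
  famGen {Subgroup.map (diagHom π) ⊤}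

/-- The family `F₁ = F⟨{H_{γ,b} | γ ∈ π, b ∈ π∖{e}}⟩` of subgroups of `π × π`. -/
def famF1 (π : Type*) [Group π] : Set (Subgroup (π × π)) :=
  famGen {K | ∃ γ b : π, b ≠ 1 ∧ K = Hsub γ ({b} : Set π)}

section Aux

variable {π : Type*} [Group π]

lemma mem_Hsub {γ : π} {S : Set π} {p : π × π} :
    p ∈ Hsub γ S ↔ p.2 ∈ Subgroup.centralizer S ∧ p.1 = γ * p.2 * γ⁻¹ := by
  simp only [Hsub, Subgroup.mem_map, MulEquiv.coe_toMonoidHom, MulAut.conj_apply, diagHom,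
    MonoidHom.prod_apply, MonoidHom.id_apply]
  constructor
  · rintro ⟨q, ⟨x, hx, rfl⟩, rfl⟩
    simp [Prod.ext_iff, hx, mul_assoc]
  · rintro ⟨h2, h1⟩
    exact ⟨(p.2, p.2), ⟨p.2, h2, rfl⟩, by simp [Prod.ext_iff, h1, mul_assoc]⟩

lemma mem_map_conj {g₁ g₂ : π} {M : Subgroup (π × π)} {p : π × π} :
    p ∈ Subgroup.map (MulAut.conj ((g₁, g₂) : π × π)).toMonoidHom M ↔
      (g₁⁻¹ * p.1 * g₁, g₂⁻¹ * p.2 * g₂) ∈ M := by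
  constructor
  · rintro ⟨q, hq, rfl⟩
    simpa [Prod.ext_iff, mul_assoc] using hq
  · intro h
    exact ⟨_, h, by simp [Prod.ext_iff, mul_assoc]⟩

lemma map_conj_Hsub (g₁ g₂ δ b : π) :
    Subgroup.map (MulAut.conj ((g₁, g₂) : π × π)).toMonoidHom (Hsub δ {b}) =
      Hsub (g₁ * δ * g₂⁻¹) {g₂ * b * g₂⁻¹} := by
  ext p
  simp only [mem_map_conj, mem_Hsub, Subgroup.mem_centralizer_iff, Set.mem_singleton_iff,
    forall_eq]
  constructor
  · rintro ⟨hc, h1⟩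
    constructor
    · have : g₂ * b * g₂⁻¹ * p.2 = p.2 * (g₂ * b * g₂⁻¹) := by
        have h' := congrArg (fun z => g₂ * z * g₂⁻¹) hc
        simpa [mul_assoc] using h'
      exact this
    · have h' := congrArg (fun z => g₁ * z * g₁⁻¹) h1
      simp only [mul_assoc] at h' ⊢
      simpa [mul_assoc] using h'
  · rintro ⟨hc, h1⟩
    constructor
    · have h' := congrArg (fun z => g₂⁻¹ * z * g₂) hc
      simpa [mul_assoc] using h'
    · have h' := congrArg (fun z => g₁⁻¹ * z * g₁) h1
      simpa [mul_assoc] using h'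

lemma map_conj_one {G : Type*} [Group G] (M : Subgroup G) :
    Subgroup.map (MulAut.conj (1 : G)).toMonoidHom M = M := by
  ext p
  constructor
  · rintro ⟨q, hq, rfl⟩; simpa using hq
  · intro h; exact ⟨p, h, by simp⟩

lemma diag_top_eq : Subgroup.map (diagHom π) ⊤ = Hsub (1 : π) ({1} : Set π) := by
  ext p
  simp [mem_Hsub, diagHom, Subgroup.mem_map, Subgroup.mem_centralizer_iff, Prod.ext_iff,
    eq_comm]

lemma famD_iff {K : Subgroup (π × π)} :
    K ∈ famD π ↔ ∃ γ : π, K ≤ Hsub γ ({1} : Set π) := by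
  constructor
  · rintro ⟨M, hM, ⟨g₁, g₂⟩, hK⟩
    simp only [Set.mem_singleton_iff] at hM
    subst hM
    refine ⟨g₁ * g₂⁻¹, ?_⟩
    rw [diag_top_eq, map_conj_Hsub] at hK
    simpa using hK
  · rintro ⟨γ, hK⟩
    refine ⟨_, rfl, ((γ, 1) : π × π), ?_⟩
    rw [diag_top_eq, map_conj_Hsub]
    simpa using hK

lemma famF1_iff {K : Subgroup (π × π)} :
    K ∈ famF1 π ↔ ∃ γ b : π, b ≠ 1 ∧ K ≤ Hsub γ ({b} : Set π) := by
  constructor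
  · rintro ⟨M, ⟨δ, b, hb, rfl⟩, ⟨g₁, g₂⟩, hK⟩
    rw [map_conj_Hsub] at hK
    exact ⟨g₁ * δ * g₂⁻¹, g₂ * b * g₂⁻¹, by simpa using hb, hK⟩
  · rintro ⟨γ, b, hb, hK⟩
    exact ⟨Hsub γ {b}, ⟨γ, b, hb, rfl⟩, 1, by rwa [map_conj_one]⟩

lemma mem_Hsub_one (γ x : π) : ((γ * x * γ⁻¹, x) : π × π) ∈ Hsub γ ({1} : Set π) := by
  rw [mem_Hsub]
  exact ⟨Subgroup.mem_centralizer_iff.2 (by simp), rfl⟩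

lemma trivial_center (hss : famF1 π ⊂ famD π) (b : π) (hb : ∀ y : π, b * y = y * b) :
    b = 1 := by
  by_contra hb1
  obtain ⟨K, hKD, hKF⟩ := Set.exists_of_ssubset hss
  refine hKF (famF1_iff.2 ?_)
  obtain ⟨γ, hK⟩ := famD_iff.1 hKD
  refine ⟨γ, b, hb1, le_trans hK ?_⟩
  intro p hp
  rw [mem_Hsub] at hp ⊢
  exact ⟨Subgroup.mem_centralizer_iff.2 (by simpa using hb p.2), hp.2⟩

lemma Hsub_one_not_mem_famF1 (hss : famF1 π ⊂ famD π) (γ : π) :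
    Hsub γ ({1} : Set π) ∉ famF1 π := by
  intro h
  obtain ⟨δ, b, hb, hle⟩ := famF1_iff.1 h
  refine hb (trivial_center hss b fun y => ?_)
  have := hle (mem_Hsub_one γ y)
  rw [mem_Hsub] at this
  have hc := Subgroup.mem_centralizer_iff.1 this.1 b rfl
  simpa using hc

lemma Hsub_one_le (hss : famF1 π ⊂ famD π) {γ δ : π}
    (h : Hsub γ ({1} : Set π) ≤ Hsub δ ({1} : Set π)) :
    Hsub γ ({1} : Set π) = Hsub δ ({1} : Set π) := by
  have hγδ : γ = δ := by
    have key : ∀ y : π, γ * y * γ⁻¹ = δ * y * δ⁻¹ := fun y => by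
      have := h (mem_Hsub_one γ y)
      rw [mem_Hsub] at this
      simpa using this.2
    have hc : δ⁻¹ * γ = 1 := by
      refine trivial_center hss _ fun y => ?_
      have := key y
      have h' := congrArg (fun z => δ⁻¹ * z * γ) this
      simpa [mul_assoc] using h'
    have := congrArg (δ * ·) hc
    simpa [mul_assoc] using this
  rw [hγδ]

end Aux

/-- If `F₁ ⊊ D`, then the maximal elements of `D∖F₁` are precisely the subgroups
`H_{γ,e} = (γ,e)·Δ(π)·(γ⁻¹,e)` for `γ ∈ π`. -/
theorem maximal_elements_D_diff_F1 {π : Type*} [Group π] (hss : famF1 π ⊂ famD π) :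
    ∀ K : Subgroup (π × π),
      (K ∈ famD π \ famF1 π ∧ ∀ L ∈ famD π \ famF1 π, K ≤ L → K = L) ↔
        ∃ γ : π, K = Hsub γ ({1} : Set π) := by
  intro K
  constructor
  · rintro ⟨⟨hKD, hKF⟩, hmax⟩
    obtain ⟨γ, hK⟩ := famD_iff.1 hKD
    refine ⟨γ, hmax _ ⟨famD_iff.2 ⟨γ, le_refl _⟩, Hsub_one_not_mem_famF1 hss γ⟩ hK⟩
  · rintro ⟨γ, rfl⟩
    refine ⟨⟨famD_iff.2 ⟨γ, le_refl _⟩, Hsub_one_not_mem_famF1 hss γ⟩, ?_⟩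
    rintro L ⟨hLD, hLF⟩ hKL
    obtain ⟨δ, hL⟩ := famD_iff.1 hLD
    have := Hsub_one_le hss (le_trans hKL hL)
    exact le_antisymm hKL (this ▸ hL)
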